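/- Let N ≥ 1, let δ be real, let k = −1, and let Γ: ℝ → ℝ be continuous. Let C be the N×N real tridiagonal matrix with all diagonal entries −(1+k) = 0, all superdiagonal entries 1, and all subdiagonal entries k = −1, and let Ω^δ ∈ ℝ^N be defined by Ω₁ = −Γ(δ), Ωᵢ = 0 for 2 ≤ i ≤ N−1, and Ω_N = Γ(δ). Let x: ℝ → ℝ^N be a differentiable solution of ẋ = Ω^δ + CΓ(x), and define E(x) = Σ_{i=1}^N ( ∫₀^{xᵢ} Γ(y) dy − Γ(δ)·xᵢ ). Then E(x(t)) is constant in t. -/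

import Mathlib

open Matrix

/-- The Lyapunov-type functional `E(x) = Σᵢ (∫₀^{xᵢ} Γ(y) dy − Γ(δ)·xᵢ)`. -/
noncomputable def lyapunovE (N : ℕ) (Γ : ℝ → ℝ) (δ : ℝ) (v : Fin N → ℝ) : ℝ :=
  ∑ i, ((∫ y in (0:ℝ)..(v i), Γ y) - Γ δ * v i)

/-- For `k = −1`, the Lyapunov functional `E` is constant along
any solution of the phase-difference system `ẋ = Ω^δ + CΓ(x)`. -/
theorem energy_conserved (N : ℕ) (hN : 1 ≤ N) (k δ : ℝ) (hk : k = -1) (Γ : ℝ → ℝ)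
    (hΓ : Continuous Γ)
    (C : Matrix (Fin N) (Fin N) ℝ)
    (hC : ∀ i j : Fin N, C i j =
      if (i : ℕ) = (j : ℕ) then -(1 + k)
      else if (j : ℕ) = (i : ℕ) + 1 then 1
      else if (i : ℕ) = (j : ℕ) + 1 then k else 0)
    (Ω : Fin N → ℝ)
    (hΩ : ∀ i : Fin N, Ω i =
      (if (i : ℕ) = 0 then k * Γ δ else 0) + (if (i : ℕ) = N - 1 then Γ δ else 0))
    (x : ℝ → Fin N → ℝ)
    (hx : ∀ (t : ℝ) (i : Fin N),
      HasDerivAt (fun s => x s i) (Ω i + (C *ᵥ fun j => Γ (x t j)) i) t) :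
    ∀ t₁ t₂ : ℝ, lyapunovE N Γ δ (x t₁) = lyapunovE N Γ δ (x t₂) := by
  subst hk
  set c := Γ δ with hc
  -- antisymmetry of C
  have hA : ∀ i j : Fin N, C j i = - C i j := by
    intro i j
    rw [hC, hC]
    split_ifs <;> first | ring1 | (exfalso; omega)
  -- column sums of C
  have hcol : ∀ i : Fin N, (∑ j, C j i) =
      (if 0 < (i:ℕ) then (1:ℝ) else 0) + (if (i:ℕ) + 1 < N then (-1:ℝ) else 0) := by
    intro i
    have hsplit : ∀ j : Fin N, C j i =
        (if (i:ℕ) = (j:ℕ) + 1 then (1:ℝ) else 0) + (if (j:ℕ) = (i:ℕ) + 1 then (-1:ℝ) else 0) := by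
      intro j
      rw [hC]
      split_ifs <;> first | ring1 | (exfalso; omega)
    rw [Finset.sum_congr rfl (fun j _ => hsplit j), Finset.sum_add_distrib]
    congr 1
    · by_cases h : 0 < (i:ℕ)
      · have hb : (i:ℕ) - 1 < N := by have := i.isLt; omega
        have heq : ∀ j : Fin N, ((i:ℕ) = (j:ℕ) + 1) ↔ j = ⟨(i:ℕ) - 1, hb⟩ := by
          intro j
          constructor
          · intro hj; apply Fin.ext; simp; omega
          · intro hj; subst hj; simp; omega
        simp only [heq]
        simp [h]
      · have : ∀ j : Fin N, ¬ ((i:ℕ) = (j:ℕ) + 1) := by intro j; omega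
        simp [this, h]
    · by_cases h : (i:ℕ) + 1 < N
      · have heq : ∀ j : Fin N, ((j:ℕ) = (i:ℕ) + 1) ↔ j = ⟨(i:ℕ) + 1, h⟩ := by
          intro j
          constructor
          · intro hj; apply Fin.ext; simpa using hj
          · intro hj; subst hj; simp
        simp only [heq]
        simp [h]
      · have : ∀ j : Fin N, ¬ ((j:ℕ) = (i:ℕ) + 1) := by
          intro j; have := j.isLt; omega
        simp [this, h]
  -- Ω equals c times the column sums of C
  have hΩ' : ∀ i : Fin N, Ω i = c * ∑ j, C j i := by
    intro i
    rw [hΩ, hcol]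
    have := i.isLt
    split_ifs <;> first | ring1 | (exfalso; omega)
  -- the key algebraic identity
  have key : ∀ g : Fin N → ℝ, (∑ i, (g i - c) * (Ω i + (C *ᵥ g) i)) = 0 := by
    intro g
    have hmv : ∀ i, (C *ᵥ g) i = ∑ j, C i j * g j := fun i => rfl
    have h1 : (∑ i, (g i - c) * (Ω i + (C *ᵥ g) i))
        = (∑ i, ∑ j, (g i - c) * c * C j i) + ∑ i, ∑ j, (g i - c) * (C i j * g j) := by
      rw [← Finset.sum_add_distrib]
      refine Finset.sum_congr rfl fun i _ => ?_
      rw [hΩ' i, hmv i, ← Finset.mul_sum, ← Finset.mul_sum]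
      ring
    have h2 : (∑ i, ∑ j, (g i - c) * c * C j i) = ∑ i, ∑ j, (g j - c) * c * C i j :=
      Finset.sum_comm
    have h4 : (∑ i, ∑ j, C i j * (g i * g j - c * c)) = 0 := by
      have hs : (∑ i, ∑ j, C i j * (g i * g j - c * c))
          = ∑ i, ∑ j, C j i * (g j * g i - c * c) := Finset.sum_comm
      have hneg : (∑ i, ∑ j, C j i * (g j * g i - c * c))
          = - ∑ i, ∑ j, C i j * (g i * g j - c * c) := by
        rw [← Finset.sum_neg_distrib]
        refine Finset.sum_congr rfl fun i _ => ?_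
        rw [← Finset.sum_neg_distrib]
        refine Finset.sum_congr rfl fun j _ => ?_
        rw [hA i j]; ring
      linarith [hs.trans hneg]
    rw [h1, h2, ← Finset.sum_add_distrib]
    rw [← h4]
    refine Finset.sum_congr rfl fun i _ => ?_
    rw [← Finset.sum_add_distrib]
    refine Finset.sum_congr rfl fun j _ => ?_
    ring
  -- the derivative of E along the solution is zero
  have hder : ∀ t : ℝ, HasDerivAt (fun s => lyapunovE N Γ δ (x s)) 0 t := by
    intro t
    have hsum : HasDerivAt (fun s => lyapunovE N Γ δ (x s))
        (∑ i, ((fun j => Γ (x t j)) i - c) * (Ω i + (C *ᵥ fun j => Γ (x t j)) i)) t := by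
      have : HasDerivAt (fun s => ∑ i, ((∫ y in (0:ℝ)..(x s i), Γ y) - c * x s i))
          (∑ i, ((fun j => Γ (x t j)) i - c) * (Ω i + (C *ᵥ fun j => Γ (x t j)) i)) t := by
        apply HasDerivAt.fun_sum
        intro i _
        have hInt : HasDerivAt (fun u => ∫ y in (0:ℝ)..u, Γ y) (Γ (x t i)) (x t i) :=
          intervalIntegral.integral_hasDerivAt_right (hΓ.intervalIntegrable _ _)
            (hΓ.stronglyMeasurableAtFilter _ _) hΓ.continuousAt
        have h1 := hInt.comp t (hx t i)
        have h2 := (hx t i).const_mul c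
        have h3 := h1.sub h2
        convert h3 using 1
        · rfl
        ring
      exact this
    rw [key (fun j => Γ (x t j))] at hsum
    exact hsum
  intro t₁ t₂
  exact is_const_of_deriv_eq_zero (fun t => (hder t).differentiableAt)
    (fun t => (hder t).deriv) t₁ t₂
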